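/- Let R > r > 0 and ω ≠ 0. Define c₀(t) = (R·cos(ω·t), R·sin(ω·t)), c₁(t) = −c₀(t), and the tangential heading h(t) = (−sin(ω·t), cos(ω·t)). Then for all t ∈ ℝ: (i) dist(c₀(t), c₁(t)) = 2R; (ii) for every τ ≥ 0, ‖c₀(t) + τ·h(t) − c₁(t)‖ ≥ 2R > r and ‖c₁(t) − τ·h(t) − c₀(t)‖ ≥ 2R > r, so neither robot's forward ray meets the closed disk of radius r around the other robot's center; and (iii) the union of the closed disks of radius r centered at c₀(t) and c₁(t) is not connected. -/

import Mathlib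

open Real Metric

noncomputable def pt (a b : ℝ) : EuclideanSpace ℝ (Fin 2) := WithLp.toLp 2 ![a, b]

lemma norm_pt (a b : ℝ) : ‖pt a b‖ = Real.sqrt (a ^ 2 + b ^ 2) := by
  rw [EuclideanSpace.norm_eq]
  simp [pt, Fin.sum_univ_two, sq_abs]

/-- Counterexample to the implicit assumption in the earlier two-robot proof: two robots
moving antipodally on the same circle of radius `R` with tangential headings stay at
distance `2R`, never see one another (their forward rays miss the other's disk of radius
`r < R`), and never aggregate. -/
theorem antipodal_circle_no_aggregation (R r ω : ℝ) (hRr : R > r) (hr : 0 < r) (hω : ω ≠ 0) :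
    ∀ t : ℝ,
      dist (pt (R * Real.cos (ω * t)) (R * Real.sin (ω * t)))
        (-(pt (R * Real.cos (ω * t)) (R * Real.sin (ω * t)))) = 2 * R ∧
      (∀ τ : ℝ, 0 ≤ τ →
        ‖pt (R * Real.cos (ω * t)) (R * Real.sin (ω * t)) +
            τ • pt (-Real.sin (ω * t)) (Real.cos (ω * t)) -
            (-(pt (R * Real.cos (ω * t)) (R * Real.sin (ω * t))))‖ ≥ 2 * R ∧
        ‖-(pt (R * Real.cos (ω * t)) (R * Real.sin (ω * t))) -
            τ • pt (-Real.sin (ω * t)) (Real.cos (ω * t)) -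
            pt (R * Real.cos (ω * t)) (R * Real.sin (ω * t))‖ ≥ 2 * R) ∧
      2 * R > r ∧
      ¬ IsConnected (closedBall (pt (R * Real.cos (ω * t)) (R * Real.sin (ω * t))) r ∪
          closedBall (-(pt (R * Real.cos (ω * t)) (R * Real.sin (ω * t)))) r) := by
  intro t
  set s := ω * t
  set C := Real.cos s
  set S := Real.sin s
  have hCS : C ^ 2 + S ^ 2 = 1 := by
    have := Real.sin_sq_add_cos_sq s; linarith
  have hR : 0 < R := lt_trans hr hRr
  set c : EuclideanSpace ℝ (Fin 2) := pt (R * C) (R * S) with hc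
  set h : EuclideanSpace ℝ (Fin 2) := pt (-S) C with hh
  have key : ∀ τ : ℝ, ‖c + τ • h - (-c)‖ = Real.sqrt (4 * R ^ 2 + τ ^ 2) ∧
      ‖-c - τ • h - c‖ = Real.sqrt (4 * R ^ 2 + τ ^ 2) := by
    intro τ
    have e1 : c + τ • h - (-c) = pt (2 * (R * C) + τ * (-S)) (2 * (R * S) + τ * C) := by
      ext i; fin_cases i <;>
        simp [hc, hh, pt, Matrix.cons_val_zero, Matrix.cons_val_one] <;> ring
    have e2 : -c - τ • h - c = pt (-(2 * (R * C) + τ * (-S))) (-(2 * (R * S) + τ * C)) := by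
      ext i; fin_cases i <;>
        simp [hc, hh, pt, Matrix.cons_val_zero, Matrix.cons_val_one] <;> ring
    have hsq : (2 * (R * C) + τ * (-S)) ^ 2 + (2 * (R * S) + τ * C) ^ 2
        = 4 * R ^ 2 + τ ^ 2 := by
      have : (2 * (R * C) + τ * (-S)) ^ 2 + (2 * (R * S) + τ * C) ^ 2
          = 4 * R ^ 2 * (C ^ 2 + S ^ 2) + τ ^ 2 * (C ^ 2 + S ^ 2) := by ring
      rw [this, hCS]; ring
    constructor
    · rw [e1, norm_pt, hsq]
    · rw [e2, norm_pt]
      rw [show (-(2 * (R * C) + τ * (-S))) ^ 2 + (-(2 * (R * S) + τ * C)) ^ 2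
        = (2 * (R * C) + τ * (-S)) ^ 2 + (2 * (R * S) + τ * C) ^ 2 by ring, hsq]
  have sqrt4R : Real.sqrt (4 * R ^ 2) = 2 * R := by
    rw [show (4 : ℝ) * R ^ 2 = (2 * R) ^ 2 by ring, Real.sqrt_sq (by linarith)]
  have hdist : dist c (-c) = 2 * R := by
    rw [dist_eq_norm]
    have hk := (key 0).1
    rw [show c - -c = c + (0:ℝ) • h - (-c) by simp, hk,
      show 4 * R ^ 2 + (0:ℝ) ^ 2 = 4 * R ^ 2 by ring, sqrt4R]
  refine ⟨hdist, ?_, by linarith, ?_⟩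
  · intro τ hτ
    have hle : 2 * R ≤ Real.sqrt (4 * R ^ 2 + τ ^ 2) := by
      rw [← sqrt4R]
      exact Real.sqrt_le_sqrt (by nlinarith)
    exact ⟨(key τ).1 ▸ hle, (key τ).2 ▸ hle⟩
  · rintro ⟨-, hpre⟩
    have hdisj : Disjoint (ball c R) (ball (-c) R) := by
      rw [Set.disjoint_left]
      intro x hx hx'
      simp only [mem_ball] at hx hx'
      have : dist c (-c) ≤ dist x c + dist x (-c) := dist_triangle_left _ _ _
      rw [hdist] at this; linarith
    have hsub : closedBall c r ∪ closedBall (-c) r ⊆ ball c R ∪ ball (-c) R :=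
      Set.union_subset_union (closedBall_subset_ball hRr) (closedBall_subset_ball hRr)
    rcases hpre.subset_or_subset isOpen_ball isOpen_ball hdisj hsub with h1 | h1
    · have hmem : -c ∈ ball c R := h1 (Set.mem_union_right _ (mem_closedBall_self hr.le))
      rw [mem_ball, dist_comm, hdist] at hmem; linarith
    · have hmem : c ∈ ball (-c) R := h1 (Set.mem_union_left _ (mem_closedBall_self hr.le))
      rw [mem_ball, hdist] at hmem; linarith
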